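/- There exists a constant c > 0 such that for infinitely many n there is a totally positive n-by-n real matrix A and a real number v for which the number of pairs (i,j) such that the (n−1)-by-(n−1) minor of A obtained by deleting row i and column j equals v is at least c · n^{4/3}. -/

import Mathlib

open Finset Matrix

/-- An m-by-n real matrix is totally positive if every minor of it
(of every size) is strictly positive. -/
def TotallyPositive {m n : ℕ} (A : Matrix (Fin m) (Fin n) ℝ) : Prop :=
  ∀ (k : ℕ) (f : Fin k → Fin m) (g : Fin k → Fin n),
    StrictMono f → StrictMono g → 0 < (A.submatrix f g).det

noncomputable def vdm {n : ℕ} (x : Fin n → ℝ) : ℝ :=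
  ∏ p, ∏ q, if p < q then x q - x p else 1

noncomputable def tpr {n : ℕ} (x y : Fin n → ℝ) : ℝ := ∏ p, ∏ q, (x p + y q)

lemma vdm_split {n : ℕ} (x : Fin (n + 1) → ℝ) :
    vdm x = vdm (x ∘ Fin.castSucc) * ∏ p : Fin n, (x (Fin.last n) - x (Fin.castSucc p)) := by
  unfold vdm
  rw [Fin.prod_univ_castSucc]
  have h1 : ∀ p : Fin n, (∏ q, if Fin.castSucc p < q then x q - x (Fin.castSucc p) else 1) =
      (∏ q : Fin n, if p < q then x (Fin.castSucc q) - x (Fin.castSucc p) else 1) *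
        (x (Fin.last n) - x (Fin.castSucc p)) := by
    intro p
    rw [Fin.prod_univ_castSucc]
    simp [Fin.castSucc_lt_castSucc_iff, Fin.castSucc_lt_last]
  have h2 : (∏ q : Fin (n+1), if Fin.last n < q then x q - x (Fin.last n) else 1) = 1 := by
    apply Finset.prod_eq_one
    intro q _
    simp [Fin.not_lt.mpr (Fin.le_last q)]
  have h3 := Finset.prod_congr rfl (fun p (_ : p ∈ Finset.univ) => h1 p)
  rw [h2, h3, Finset.prod_mul_distrib, mul_one]
  rfl

lemma tpr_split {n : ℕ} (x y : Fin (n + 1) → ℝ) :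
    tpr x y = tpr (x ∘ Fin.castSucc) (y ∘ Fin.castSucc) *
      (∏ p : Fin n, (x (Fin.castSucc p) + y (Fin.last n))) *
      ∏ q : Fin (n+1), (x (Fin.last n) + y q) := by
  unfold tpr
  rw [Fin.prod_univ_castSucc]
  have h1 : ∀ p : Fin n, (∏ q : Fin (n+1), (x (Fin.castSucc p) + y q)) =
      (∏ q : Fin n, (x (Fin.castSucc p) + y (Fin.castSucc q))) *
        (x (Fin.castSucc p) + y (Fin.last n)) := by
    intro p; rw [Fin.prod_univ_castSucc]
  rw [Finset.prod_congr rfl (fun p _ => h1 p), Finset.prod_mul_distrib]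
  rfl

lemma cauchy_det : ∀ (n : ℕ) (x y : Fin n → ℝ), (∀ i j, x i + y j ≠ 0) →
    (Matrix.of fun i j => (x i + y j)⁻¹).det = vdm x * vdm y / tpr x y := by
  intro n
  induction n with
  | zero => intro x y h; simp [vdm, tpr, Matrix.det_fin_zero]
  | succ n ih =>
    intro x y h
    set L := Fin.last n with hL
    -- step 1: subtract last row from other rows
    set A1 : Matrix (Fin (n+1)) (Fin (n+1)) ℝ :=
      Matrix.of fun i j => if i = L then (x i + y j)⁻¹ else (x i + y j)⁻¹ - (x L + y j)⁻¹ with hA1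
    have e1 : (Matrix.of fun i j : Fin (n+1) => (x i + y j)⁻¹).det = A1.det := by
      apply Matrix.det_eq_of_forall_row_eq_smul_add_const
        (fun i => if i = L then 0 else 1) L (by simp)
      intro i j
      by_cases hi : i = L <;> simp [hA1, hi]
    -- step 2,3: factor rows and columns
    set A3 : Matrix (Fin (n+1)) (Fin (n+1)) ℝ :=
      Matrix.of fun i j => if i = L then 1 else (x i + y j)⁻¹ with hA3
    have e2 : A1.det = (∏ i, (if i = L then 1 else x L - x i)) *
        ((∏ j, (x L + y j)⁻¹) * A3.det) := by
      have : A1 = Matrix.of fun i j => (if i = L then 1 else x L - x i) *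
          (Matrix.of (fun i j : Fin (n+1) => (x L + y j)⁻¹ * A3 i j) i j) := by
        ext i j
        by_cases hi : i = L
        · simp [hA1, hA3, hi]
        · have h1 := h i j
          have h2 := h L j
          simp only [hA1, hA3, Matrix.of_apply, if_neg hi]
          rw [inv_sub_inv h1 h2, div_eq_mul_inv, mul_inv]
          ring
      rw [this, Matrix.det_mul_column, Matrix.det_mul_row]
    -- step 4: subtract last column
    set A4 : Matrix (Fin (n+1)) (Fin (n+1)) ℝ :=
      Matrix.of fun i j => if j = L then A3 i L else A3 i j - A3 i L with hA4
    have e4 : A3.det = A4.det := by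
      rw [← Matrix.det_transpose A3, ← Matrix.det_transpose A4]
      apply Matrix.det_eq_of_forall_row_eq_smul_add_const
        (fun j => if j = L then 0 else 1) L (by simp)
      intro j i
      by_cases hj : j = L <;> simp [hA4, Matrix.transpose_apply, hj]
    -- step 5: expand along last row
    have hrow : ∀ j, A4 L j = if j = L then 1 else 0 := by
      intro j
      by_cases hj : j = L <;> simp [hA4, hA3, hj]
    have e5 : A4.det = (A4.submatrix L.succAbove L.succAbove).det := by
      rw [Matrix.det_succ_row A4 L]
      rw [Finset.sum_eq_single_of_mem L (Finset.mem_univ L)]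
      · have hev : (-1 : ℝ) ^ ((L : ℕ) + (L : ℕ)) = 1 := Even.neg_one_pow ⟨(L : ℕ), rfl⟩
        simp [hrow, hev]
      · intro j _ hj
        rw [hrow, if_neg hj]
        ring
    -- step 6: the minor is a scaled smaller Cauchy matrix
    have hsub : A4.submatrix L.succAbove L.succAbove = Matrix.of fun p q : Fin n =>
        (x (Fin.castSucc p) + y L)⁻¹ * ((y L - y (Fin.castSucc q)) *
          (x (Fin.castSucc p) + y (Fin.castSucc q))⁻¹) := by
      ext p q
      have hp : (Fin.castSucc p : Fin (n+1)) ≠ Fin.last n := (Fin.castSucc_lt_last p).ne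
      have hq : (Fin.castSucc q : Fin (n+1)) ≠ Fin.last n := (Fin.castSucc_lt_last q).ne
      have h1 := h (Fin.castSucc p) (Fin.castSucc q)
      have h2 := h (Fin.castSucc p) (Fin.last n)
      simp only [Matrix.submatrix_apply, hL, Fin.succAbove_last, hA4, hA3, Matrix.of_apply,
        if_neg hp, if_neg hq]
      rw [inv_sub_inv h1 h2, div_eq_mul_inv, mul_inv]
      ring
    have e6 : (A4.submatrix L.succAbove L.succAbove).det =
        (∏ p : Fin n, (x (Fin.castSucc p) + y L)⁻¹) *
        ((∏ q : Fin n, (y L - y (Fin.castSucc q))) *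
          (vdm (x ∘ Fin.castSucc) * vdm (y ∘ Fin.castSucc) /
            tpr (x ∘ Fin.castSucc) (y ∘ Fin.castSucc))) := by
      rw [hsub]
      have : (Matrix.of fun p q : Fin n =>
          (x (Fin.castSucc p) + y L)⁻¹ * ((y L - y (Fin.castSucc q)) *
            (x (Fin.castSucc p) + y (Fin.castSucc q))⁻¹)) =
          Matrix.of fun p q : Fin n => (x (Fin.castSucc p) + y L)⁻¹ *
            (Matrix.of (fun p q : Fin n => (y L - y (Fin.castSucc q)) *
              (Matrix.of (fun p q : Fin n =>
                ((x ∘ Fin.castSucc) p + (y ∘ Fin.castSucc) q)⁻¹) p q)) p q) := by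
        ext p q; rfl
      rw [this, Matrix.det_mul_column, Matrix.det_mul_row,
        ih (x ∘ Fin.castSucc) (y ∘ Fin.castSucc) (fun i j => h _ _)]
    -- assembly
    rw [e1, e2, e4, e5, e6]
    have hρ : (∏ i, (if i = L then 1 else x L - x i)) =
        ∏ p : Fin n, (x L - x (Fin.castSucc p)) := by
      rw [Fin.prod_univ_castSucc]
      have hh1 : (if (Fin.last n : Fin (n+1)) = L then (1:ℝ) else x L - x (Fin.last n)) = 1 :=
        if_pos hL.symm
      have hh2 : ∀ p : Fin n, (if (Fin.castSucc p : Fin (n+1)) = L then (1:ℝ)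
          else x L - x (Fin.castSucc p)) = x L - x (Fin.castSucc p) :=
        fun p => if_neg (Fin.castSucc_lt_last p).ne
      rw [hh1, mul_one]
      exact Finset.prod_congr rfl fun p _ => hh2 p
    rw [hρ, vdm_split x, vdm_split y, tpr_split x y]
    have hT : tpr (x ∘ Fin.castSucc) (y ∘ Fin.castSucc) ≠ 0 := by
      apply Finset.prod_ne_zero_iff.mpr
      intro p _
      exact Finset.prod_ne_zero_iff.mpr fun q _ => h _ _
    have hY : ∀ j, x L + y j ≠ 0 := fun j => h L j
    have hX : ∀ p : Fin n, x (Fin.castSucc p) + y L ≠ 0 := fun p => h _ L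
    have hPY : (∏ j, (x L + y j)) ≠ 0 := Finset.prod_ne_zero_iff.mpr fun j _ => hY j
    have hPX : (∏ p : Fin n, (x (Fin.castSucc p) + y L)) ≠ 0 :=
      Finset.prod_ne_zero_iff.mpr fun p _ => hX p
    rw [Finset.prod_inv_distrib, Finset.prod_inv_distrib]
    simp only [← hL]
    field_simp

lemma vdm_pos {n : ℕ} {x : Fin n → ℝ} (hx : StrictMono x) : 0 < vdm x := by
  unfold vdm
  apply Finset.prod_pos
  intro p _
  apply Finset.prod_pos
  intro q _
  by_cases hpq : p < q
  · rw [if_pos hpq]; exact sub_pos.mpr (hx hpq)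
  · rw [if_neg hpq]; norm_num

lemma tpr_pos {n : ℕ} {x y : Fin n → ℝ} (h : ∀ i j, 0 < x i + y j) : 0 < tpr x y :=
  Finset.prod_pos fun p _ => Finset.prod_pos fun q _ => h p q

/-- scaled Cauchy matrix -/
noncomputable def scmat {n : ℕ} (u v x y : Fin n → ℝ) : Matrix (Fin n) (Fin n) ℝ :=
  Matrix.of fun i j => u i * v j * (x i + y j)⁻¹

lemma scmat_det {n : ℕ} (u v x y : Fin n → ℝ) (h : ∀ i j, 0 < x i + y j) :
    (scmat u v x y).det = (∏ i, u i) * (∏ j, v j) * (vdm x * vdm y / tpr x y) := by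
  have : scmat u v x y = Matrix.of fun i j =>
      u i * (Matrix.of (fun i j : Fin n => v j *
        (Matrix.of (fun i j : Fin n => (x i + y j)⁻¹) i j)) i j) := by
    ext i j; simp [scmat, mul_assoc]
  rw [this, Matrix.det_mul_column, Matrix.det_mul_row, cauchy_det n x y (fun i j => (h i j).ne')]
  ring

lemma scmat_det_pos {n : ℕ} {u v x y : Fin n → ℝ} (hu : ∀ i, 0 < u i) (hv : ∀ j, 0 < v j)
    (hx : StrictMono x) (hy : StrictMono y) (h : ∀ i j, 0 < x i + y j) :
    0 < (scmat u v x y).det := by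
  rw [scmat_det u v x y h]
  have h1 := vdm_pos hx
  have h2 := vdm_pos hy
  have h3 := tpr_pos h
  have h4 : (0:ℝ) < ∏ i, u i := Finset.prod_pos fun i _ => hu i
  have h5 : (0:ℝ) < ∏ j, v j := Finset.prod_pos fun j _ => hv j
  positivity

lemma scmat_tp {n : ℕ} {u v x y : Fin n → ℝ} (hu : ∀ i, 0 < u i) (hv : ∀ j, 0 < v j)
    (hx : StrictMono x) (hy : StrictMono y) (h : ∀ i j, 0 < x i + y j) :
    TotallyPositive (scmat u v x y) := by
  intro k f g hf hg
  have : (scmat u v x y).submatrix f g = scmat (u ∘ f) (v ∘ g) (x ∘ f) (y ∘ g) := rfl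
  rw [this]
  exact scmat_det_pos (fun i => hu _) (fun j => hv _) (hx.comp hf) (hy.comp hg)
    (fun i j => h _ _)

lemma tpr_succAbove {n : ℕ} (x y : Fin (n+1) → ℝ) (i j : Fin (n+1)) :
    tpr x y * (x i + y j) =
      (∏ q, (x i + y q)) * (∏ p, (x p + y j)) *
        tpr (x ∘ i.succAbove) (y ∘ j.succAbove) := by
  have step1 : tpr x y = (∏ q, (x i + y q)) *
      ∏ p : Fin n, ∏ q : Fin (n+1), (x (i.succAbove p) + y q) := by
    unfold tpr
    exact Fin.prod_univ_succAbove (fun p => ∏ q, (x p + y q)) i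
  have step2 : ∀ p : Fin n, (∏ q : Fin (n+1), (x (i.succAbove p) + y q)) =
      (x (i.succAbove p) + y j) * ∏ q : Fin n, (x (i.succAbove p) + y (j.succAbove q)) :=
    fun p => Fin.prod_univ_succAbove (fun q => (x (i.succAbove p) + y q)) j
  have step3 : (∏ p : Fin (n+1), (x p + y j)) =
      (x i + y j) * ∏ p : Fin n, (x (i.succAbove p) + y j) :=
    Fin.prod_univ_succAbove (fun p => (x p + y j)) i
  rw [step1, Finset.prod_congr rfl (fun p _ => step2 p), Finset.prod_mul_distrib, step3]
  unfold tpr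
  simp only [Function.comp_apply]
  ring

lemma minor_eq {n : ℕ} (u v x y : Fin (n+1) → ℝ) (h : ∀ i j, 0 < x i + y j)
    (i j : Fin (n+1)) :
    ((scmat u v x y).submatrix i.succAbove j.succAbove).det =
      (∏ p, u (i.succAbove p)) * (∏ q, v (j.succAbove q)) *
        (vdm (x ∘ i.succAbove) * vdm (y ∘ j.succAbove) *
          ((∏ q, (x i + y q)) * (∏ p, (x p + y j)) / (tpr x y * (x i + y j)))) := by
  have e : ((scmat u v x y).submatrix i.succAbove j.succAbove) =
      scmat (u ∘ i.succAbove) (v ∘ j.succAbove) (x ∘ i.succAbove) (y ∘ j.succAbove) := rfl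
  rw [e, scmat_det (u ∘ i.succAbove) (v ∘ j.succAbove) (x ∘ i.succAbove) (y ∘ j.succAbove)
    (fun p q => h _ _)]
  have hT : tpr (x ∘ i.succAbove) (y ∘ j.succAbove) =
      tpr x y * (x i + y j) / ((∏ q, (x i + y q)) * (∏ p, (x p + y j))) := by
    rw [eq_div_iff]
    · linear_combination -tpr_succAbove x y i j
    · exact (mul_pos (Finset.prod_pos fun q _ => h i q)
        (Finset.prod_pos fun p _ => h p j)).ne'
  rw [hT]
  have h1 : (0:ℝ) < ∏ q, (x i + y q) := Finset.prod_pos fun q _ => h i q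
  have h2 : (0:ℝ) < ∏ p, (x p + y j) := Finset.prod_pos fun p _ => h p j
  have h3 : (0:ℝ) < tpr x y := tpr_pos h
  have h4 := h i j
  field_simp
  simp only [Function.comp_apply]
  ring

noncomputable def tfun {m : ℕ} (x y r : Fin (m+1) → ℝ) (i : Fin (m+1)) : ℝ :=
  tpr x y * r i / (vdm (x ∘ i.succAbove) * ∏ q, (x i + y q))

noncomputable def tfun' {m : ℕ} (x y s : Fin (m+1) → ℝ) (j : Fin (m+1)) : ℝ :=
  s j / (vdm (y ∘ j.succAbove) * ∏ p, (x p + y j))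

lemma tfun_pos {m : ℕ} {x y r : Fin (m+1) → ℝ} (hx : StrictMono x)
    (hr : ∀ i, 0 < r i) (hpos : ∀ i j, 0 < x i + y j) (i : Fin (m+1)) :
    0 < tfun x y r i := by
  unfold tfun
  have h1 := tpr_pos hpos
  have h2 := hr i
  have h3 : 0 < vdm (x ∘ i.succAbove) := vdm_pos (hx.comp (Fin.strictMono_succAbove i))
  have h4 : (0:ℝ) < ∏ q, (x i + y q) := Finset.prod_pos fun q _ => hpos i q
  positivity

lemma tfun'_pos {m : ℕ} {x y s : Fin (m+1) → ℝ} (hy : StrictMono y)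
    (hs : ∀ j, 0 < s j) (hpos : ∀ i j, 0 < x i + y j) (j : Fin (m+1)) :
    0 < tfun' x y s j := by
  unfold tfun'
  have h2 := hs j
  have h3 : 0 < vdm (y ∘ j.succAbove) := vdm_pos (hy.comp (Fin.strictMono_succAbove j))
  have h4 : (0:ℝ) < ∏ p, (x p + y j) := Finset.prod_pos fun p _ => hpos p j
  positivity

/-- given positive targets `t`, the scaling `u i = G / t i` with
`G = (∏ t) ^ (1/m)` satisfies `∏_{p ≠ i} u p = t i`. -/
noncomputable def gscale {m : ℕ} (t : Fin (m+1) → ℝ) (i : Fin (m+1)) : ℝ :=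
  (∏ p, t p) ^ ((m:ℝ)⁻¹) / t i

lemma gscale_pos {m : ℕ} {t : Fin (m+1) → ℝ} (ht : ∀ i, 0 < t i) (i : Fin (m+1)) :
    0 < gscale t i := by
  unfold gscale
  have h1 : (0:ℝ) < ∏ p, t p := Finset.prod_pos fun p _ => ht p
  have := ht i
  positivity

lemma gscale_prod {m : ℕ} (hm : 0 < m) {t : Fin (m+1) → ℝ} (ht : ∀ i, 0 < t i)
    (i : Fin (m+1)) : (∏ p, gscale t (i.succAbove p)) = t i := by
  have hP : (0:ℝ) < ∏ p, t p := Finset.prod_pos fun p _ => ht p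
  set G : ℝ := (∏ p, t p) ^ ((m:ℝ)⁻¹) with hG
  have hGpos : 0 < G := Real.rpow_pos_of_pos hP _
  have hGm : G ^ (m : ℕ) = ∏ p, t p := by
    rw [hG, ← Real.rpow_natCast (((∏ p, t p) ^ ((m:ℝ)⁻¹))) m, ← Real.rpow_mul hP.le,
      inv_mul_cancel₀ (by exact_mod_cast hm.ne' : (m:ℝ) ≠ 0), Real.rpow_one]
  have hall : (∏ p, gscale t p) = G := by
    unfold gscale
    rw [← hG, Finset.prod_div_distrib, Finset.prod_const, Finset.card_univ, Fintype.card_fin]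
    rw [pow_succ, hGm]
    field_simp
  have key := Fin.prod_univ_succAbove (gscale t) i
  rw [hall] at key
  have hgi : gscale t i ≠ 0 := (gscale_pos ht i).ne'
  have hti : t i ≠ 0 := (ht i).ne'
  have h2 : ∏ p, gscale t (i.succAbove p) = G / gscale t i := by
    rw [key]
    field_simp
  rw [h2]
  have h3 : gscale t i = G / t i := by rw [hG]; rfl
  rw [h3]
  field_simp

lemma minor_val {m : ℕ} (hm : 0 < m) {x y r s : Fin (m+1) → ℝ}
    (hx : StrictMono x) (hy : StrictMono y) (hr : ∀ i, 0 < r i) (hs : ∀ j, 0 < s j)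
    (hpos : ∀ i j, 0 < x i + y j) (i j : Fin (m+1)) :
    ((scmat (gscale (tfun x y r)) (gscale (tfun' x y s)) x y).submatrix
        i.succAbove j.succAbove).det = r i * s j / (x i + y j) := by
  rw [minor_eq _ _ _ _ hpos i j]
  rw [gscale_prod hm (tfun_pos hx hr hpos) i, gscale_prod hm (tfun'_pos hy hs hpos) j]
  unfold tfun tfun'
  have hVX : 0 < vdm (x ∘ i.succAbove) := vdm_pos (hx.comp (Fin.strictMono_succAbove i))
  have hVY : 0 < vdm (y ∘ j.succAbove) := vdm_pos (hy.comp (Fin.strictMono_succAbove j))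
  have hX : (0:ℝ) < ∏ q, (x i + y q) := Finset.prod_pos fun q _ => hpos i q
  have hY : (0:ℝ) < ∏ p, (x p + y j) := Finset.prod_pos fun p _ => hpos p j
  have hT := tpr_pos hpos
  have hxy := hpos i j
  field_simp

/-! ### the incidence construction -/

def sig (k l : ℕ) : ℕ := l / k^2 + 1
def hh (k l : ℕ) : ℕ := l % k^2 + 1
def BB (k : ℕ) : ℕ := 4*k^4 + 1
def dd (k l : ℕ) : ℕ := (k+1) * (hh k l + BB k) - sig k l
noncomputable def xr (k l : ℕ) : ℝ := if l < k^3 then ((dd k l : ℕ) : ℝ)⁻¹ else ((2 + (l - k^3) : ℕ) : ℝ)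
noncomputable def rr (k l : ℕ) : ℝ := if l < k^3 then ((hh k l + BB k : ℕ) : ℝ) / ((dd k l : ℕ) : ℝ) else 1
def aa (k l : ℕ) : ℕ := l / (2*k^2) + 1
def bb (k l : ℕ) : ℕ := l % (2*k^2) + 1
noncomputable def yr (k l : ℕ) : ℝ := ((aa k l : ℕ) : ℝ) / ((bb k l + BB k : ℕ) : ℝ)
noncomputable def sr (k l : ℕ) : ℝ := ((1 + (k+1) * aa k l : ℕ) : ℝ) / ((bb k l + BB k : ℕ) : ℝ)

lemma sig_le {k l : ℕ} (hk : 1 ≤ k) (hl : l < k^3) : sig k l ≤ k := by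
  unfold sig
  have h2 : 0 < k^2 := by positivity
  have : l / k^2 < k := Nat.div_lt_iff_lt_mul h2 |>.mpr (by ring_nf; ring_nf at hl; omega)
  omega

lemma hh_le {k l : ℕ} (hk : 1 ≤ k) : hh k l ≤ k^2 := by
  unfold hh
  have h2 : 0 < k^2 := by positivity
  have := Nat.mod_lt l h2
  omega

lemma sig_ge {k l : ℕ} : 1 ≤ sig k l := Nat.le_add_left 1 _
lemma hh_ge {k l : ℕ} : 1 ≤ hh k l := Nat.le_add_left 1 _

lemma dd_sub_le {k l : ℕ} (hk : 1 ≤ k) (hl : l < k^3) :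
    sig k l ≤ (k+1) * (hh k l + BB k) := by
  have h1 := sig_le hk hl
  have h2 : 1 ≤ hh k l + BB k := by unfold BB; omega
  calc sig k l ≤ k := h1
    _ ≤ (k+1) * 1 := by omega
    _ ≤ (k+1) * (hh k l + BB k) := Nat.mul_le_mul_left _ h2

lemma dd_ge {k l : ℕ} (hk : 1 ≤ k) (hl : l < k^3) : BB k + 1 ≤ dd k l := by
  unfold dd
  have h1 := sig_le hk hl
  have h2 : 1 ≤ hh k l := hh_ge
  have : (k+1) * (hh k l + BB k) ≥ (k+1) * (1 + BB k) :=
    Nat.mul_le_mul_left _ (by omega)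
  have h4 : (k+1) * (1 + BB k) = k + 1 + k * BB k + BB k := by ring
  apply Nat.le_sub_of_add_le
  linarith [Nat.zero_le (k * BB k)]

lemma dd_cast {k l : ℕ} (hk : 1 ≤ k) (hl : l < k^3) :
    ((dd k l : ℕ) : ℝ) = (k+1 : ℝ) * ((hh k l : ℕ) + (BB k : ℕ)) - (sig k l : ℕ) := by
  unfold dd
  rw [Nat.cast_sub (dd_sub_le hk hl)]
  push_cast
  ring

lemma aa_le {k l : ℕ} (hk : 1 ≤ k) (hl : l < 2*k^3) : aa k l ≤ k := by
  unfold aa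
  have h2 : 0 < 2*k^2 := by positivity
  have : l / (2*k^2) < k := Nat.div_lt_iff_lt_mul h2 |>.mpr (by ring_nf; ring_nf at hl; omega)
  omega

lemma aa_ge {k l : ℕ} : 1 ≤ aa k l := Nat.le_add_left 1 _

lemma bb_le {k l : ℕ} (hk : 1 ≤ k) : bb k l ≤ 2*k^2 := by
  unfold bb
  have h2 : 0 < 2*k^2 := by positivity
  have := Nat.mod_lt l h2
  omega

lemma xr_pos {k l : ℕ} (hk : 1 ≤ k) (hl : l < 2*k^3) : 0 < xr k l := by
  unfold xr
  by_cases h : l < k^3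
  · rw [if_pos h]
    have := dd_ge hk h
    have : (0:ℝ) < ((dd k l : ℕ) : ℝ) := by exact_mod_cast Nat.lt_of_lt_of_le (by unfold BB; omega) this
    positivity
  · rw [if_neg h]
    have : 0 < 2 + (l - k^3) := by omega
    exact_mod_cast this

lemma rr_pos {k l : ℕ} (hk : 1 ≤ k) (hl : l < 2*k^3) : 0 < rr k l := by
  unfold rr
  by_cases h : l < k^3
  · rw [if_pos h]
    have h1 := dd_ge hk h
    have h2 : (0:ℝ) < ((dd k l : ℕ) : ℝ) := by
      exact_mod_cast Nat.lt_of_lt_of_le (by unfold BB; omega) h1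
    have h3 : (0:ℝ) < ((hh k l + BB k : ℕ) : ℝ) := by
      have : 0 < hh k l + BB k := by unfold BB; omega
      exact_mod_cast this
    positivity
  · rw [if_neg h]; norm_num

lemma yr_pos {k l : ℕ} (hk : 1 ≤ k) : 0 < yr k l := by
  unfold yr
  have h1 : (0:ℝ) < ((aa k l : ℕ) : ℝ) := by exact_mod_cast aa_ge (k := k) (l := l)
  have h2 : (0:ℝ) < ((bb k l + BB k : ℕ) : ℝ) := by
    have : 0 < bb k l + BB k := by unfold BB bb; omega
    exact_mod_cast this
  positivity

lemma sr_pos {k l : ℕ} (hk : 1 ≤ k) : 0 < sr k l := by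
  unfold sr
  have h1 : (0:ℝ) < ((1 + (k+1) * aa k l : ℕ) : ℝ) := by
    have : 0 < 1 + (k+1) * aa k l := by omega
    exact_mod_cast this
  have h2 : (0:ℝ) < ((bb k l + BB k : ℕ) : ℝ) := by
    have : 0 < bb k l + BB k := by unfold BB bb; omega
    exact_mod_cast this
  positivity

lemma decode_row {k l l' : ℕ} (h1 : sig k l = sig k l') (h2 : hh k l = hh k l') : l = l' := by
  unfold sig at h1
  unfold hh at h2
  have h1' : l / k^2 = l' / k^2 := Nat.add_right_cancel h1
  have h2' : l % k^2 = l' % k^2 := Nat.add_right_cancel h2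
  have e1 := Nat.div_add_mod l (k^2)
  have e2 := Nat.div_add_mod l' (k^2)
  rw [h1', h2'] at e1
  exact e1.symm.trans e2

lemma decode_col {k l l' : ℕ} (h1 : aa k l = aa k l') (h2 : bb k l = bb k l') : l = l' := by
  unfold aa at h1
  unfold bb at h2
  have h1' : l / (2*k^2) = l' / (2*k^2) := Nat.add_right_cancel h1
  have h2' : l % (2*k^2) = l' % (2*k^2) := Nat.add_right_cancel h2
  have e1 := Nat.div_add_mod l (2*k^2)
  have e2 := Nat.div_add_mod l' (2*k^2)
  rw [h1', h2'] at e1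
  exact e1.symm.trans e2

lemma xr_inj {k : ℕ} (hk : 1 ≤ k) {l l' : ℕ} (hl : l < 2*k^3) (hl' : l' < 2*k^3)
    (he : xr k l = xr k l') : l = l' := by
  have hdd2 : ∀ j, j < k^3 → (2:ℝ) ≤ ((dd k j : ℕ) : ℝ) := by
    intro j hj
    have h := dd_ge hk hj
    unfold BB at h
    have : 2 ≤ dd k j := by omega
    exact_mod_cast this
  unfold xr at he
  by_cases c1 : l < k^3 <;> by_cases c2 : l' < k^3
  · rw [if_pos c1, if_pos c2] at he
    have hd : dd k l = dd k l' := by exact_mod_cast inv_inj.mp he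
    have hreal : ((dd k l : ℕ):ℝ) = ((dd k l' : ℕ):ℝ) := by exact_mod_cast hd
    rw [dd_cast hk c1, dd_cast hk c2] at hreal
    have hs1 : ((sig k l :ℕ):ℝ) ≤ k := by exact_mod_cast sig_le hk c1
    have hs2 : ((sig k l' :ℕ):ℝ) ≤ k := by exact_mod_cast sig_le hk c2
    have hg1 : (1:ℝ) ≤ ((sig k l :ℕ):ℝ) := by exact_mod_cast sig_ge (k := k) (l := l)
    have hg2 : (1:ℝ) ≤ ((sig k l' :ℕ):ℝ) := by exact_mod_cast sig_ge (k := k) (l := l')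
    have hk0 : (1:ℝ) ≤ (k:ℝ) := by exact_mod_cast hk
    have hhh : hh k l = hh k l' := by
      by_contra hne
      rcases Nat.lt_or_ge (hh k l) (hh k l') with hlt | hge
      · have hc : ((hh k l:ℕ):ℝ) + 1 ≤ ((hh k l':ℕ):ℝ) := by exact_mod_cast hlt
        nlinarith
      · have hlt' : hh k l' < hh k l := by omega
        have hc : ((hh k l':ℕ):ℝ) + 1 ≤ ((hh k l:ℕ):ℝ) := by exact_mod_cast hlt'
        nlinarith
    have hsig : sig k l = sig k l' := by
      have : ((hh k l:ℕ):ℝ) = ((hh k l':ℕ):ℝ) := by exact_mod_cast hhh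
      have : ((sig k l:ℕ):ℝ) = ((sig k l':ℕ):ℝ) := by rw [this] at hreal; linarith
      exact_mod_cast this
    exact decode_row hsig hhh
  · exfalso
    rw [if_pos c1, if_neg c2] at he
    have h1 := hdd2 l c1
    have h2 : (2:ℝ) ≤ ((2 + (l' - k^3) : ℕ):ℝ) := by exact_mod_cast Nat.le_add_right 2 _
    have h3 : ((dd k l : ℕ):ℝ)⁻¹ ≤ 2⁻¹ := by
      apply inv_anti₀ (by norm_num) h1
    rw [he] at h3
    linarith
  · exfalso
    rw [if_neg c1, if_pos c2] at he
    have h1 := hdd2 l' c2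
    have h2 : (2:ℝ) ≤ ((2 + (l - k^3) : ℕ):ℝ) := by exact_mod_cast Nat.le_add_right 2 _
    have h3 : ((dd k l' : ℕ):ℝ)⁻¹ ≤ 2⁻¹ := by
      apply inv_anti₀ (by norm_num) h1
    rw [← he] at h3
    linarith
  · rw [if_neg c1, if_neg c2] at he
    have : 2 + (l - k^3) = 2 + (l' - k^3) := by exact_mod_cast he
    omega

set_option maxHeartbeats 1000000 in
lemma yr_inj {k : ℕ} (hk : 1 ≤ k) {l l' : ℕ} (hl : l < 2*k^3) (hl' : l' < 2*k^3)
    (he : yr k l = yr k l') : l = l' := by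
  unfold yr at he
  have hb1 : (0:ℝ) < ((bb k l + BB k : ℕ):ℝ) := by
    have : 0 < bb k l + BB k := by unfold bb BB; omega
    exact_mod_cast this
  have hb2 : (0:ℝ) < ((bb k l' + BB k : ℕ):ℝ) := by
    have : 0 < bb k l' + BB k := by unfold bb BB; omega
    exact_mod_cast this
  rw [div_eq_div_iff hb1.ne' hb2.ne'] at he
  set A : ℝ := ((aa k l : ℕ):ℝ) with hA
  set A' : ℝ := ((aa k l' : ℕ):ℝ) with hA'
  set b : ℝ := ((bb k l : ℕ):ℝ) with hb
  set b' : ℝ := ((bb k l' : ℕ):ℝ) with hb'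
  have hBc : ((BB k : ℕ):ℝ) = 4*(k:ℝ)^4+1 := by unfold BB; push_cast; ring
  have he' : A * (b' + ((BB k : ℕ):ℝ)) = A' * (b + ((BB k : ℕ):ℝ)) := by
    rw [hA, hA', hb, hb']; push_cast at he ⊢; linarith [he]
  rw [hBc] at he'
  have a1 : (1:ℝ) ≤ A := by rw [hA]; exact_mod_cast aa_ge (k := k) (l := l)
  have a1' : (1:ℝ) ≤ A' := by rw [hA']; exact_mod_cast aa_ge (k := k) (l := l')
  have a2 : A ≤ (k:ℝ) := by rw [hA]; exact_mod_cast aa_le hk hl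
  have a2' : A' ≤ (k:ℝ) := by rw [hA']; exact_mod_cast aa_le hk hl'
  have bg : (1:ℝ) ≤ b := by
    rw [hb]; exact_mod_cast (Nat.le_add_left 1 _ : 1 ≤ bb k l)
  have bg' : (1:ℝ) ≤ b' := by
    rw [hb']; exact_mod_cast (Nat.le_add_left 1 _ : 1 ≤ bb k l')
  have bl : b ≤ 2*(k:ℝ)^2 := by
    rw [hb]
    have := bb_le hk (l := l); exact_mod_cast this
  have bl' : b' ≤ 2*(k:ℝ)^2 := by
    rw [hb']
    have := bb_le hk (l := l'); exact_mod_cast this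
  have hk1 : (1:ℝ) ≤ (k:ℝ) := by exact_mod_cast hk
  have hcube : (k:ℝ)^3 ≤ (k:ℝ)^4 := by
    nlinarith [mul_le_mul_of_nonneg_left hk1 (pow_nonneg (by linarith : (0:ℝ) ≤ (k:ℝ)) 3)]
  have haa : aa k l = aa k l' := by
    rcases Nat.lt_trichotomy (aa k l) (aa k l') with hlt | heq | hgt
    · exfalso
      have hAlt : A + 1 ≤ A' := by rw [hA, hA']; exact_mod_cast hlt
      have h5 : (A+1) * (b + (4*(k:ℝ)^4+1)) ≤ A' * (b + (4*(k:ℝ)^4+1)) :=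
        mul_le_mul_of_nonneg_right hAlt (by positivity)
      have s1 : b' - b ≤ 2*(k:ℝ)^2 := by linarith
      have s2 : A * (b' - b) ≤ A * (2*(k:ℝ)^2) :=
        mul_le_mul_of_nonneg_left s1 (by linarith)
      have s3 : A * (2*(k:ℝ)^2) ≤ (k:ℝ) * (2*(k:ℝ)^2) :=
        mul_le_mul_of_nonneg_right a2 (by positivity)
      linarith [he', h5, s2, s3, hcube]
    · exact heq
    · exfalso
      have hAlt : A' + 1 ≤ A := by rw [hA, hA']; exact_mod_cast hgt
      have h5 : (A'+1) * (b' + (4*(k:ℝ)^4+1)) ≤ A * (b' + (4*(k:ℝ)^4+1)) :=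
        mul_le_mul_of_nonneg_right hAlt (by positivity)
      have s1 : b - b' ≤ 2*(k:ℝ)^2 := by linarith
      have s2 : A' * (b - b') ≤ A' * (2*(k:ℝ)^2) :=
        mul_le_mul_of_nonneg_left s1 (by linarith)
      have s3 : A' * (2*(k:ℝ)^2) ≤ (k:ℝ) * (2*(k:ℝ)^2) :=
        mul_le_mul_of_nonneg_right a2' (by positivity)
      linarith [he', h5, s2, s3, hcube]
  have hAA : A = A' := by rw [hA, hA', haa]
  have hbb : bb k l = bb k l' := by
    have hA0 : A ≠ 0 := by linarith
    rw [← hAA] at he'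
    have : b' + (4*(k:ℝ)^4+1) = b + (4*(k:ℝ)^4+1) := mul_left_cancel₀ hA0 he'
    have : b = b' := by linarith
    rw [hb, hb'] at this
    exact_mod_cast this
  exact decode_col haa hbb

def enc (k l a0 : ℕ) : ℕ := a0*(2*k^2) + (sig k l*(a0+1) + hh k l - 1)

lemma enc_t_lt {k l a0 : ℕ} (hk : 1 ≤ k) (hl : l < k^3) (ha : a0 < k) :
    sig k l*(a0+1) + hh k l - 1 < 2*k^2 := by
  have h1 := sig_le hk hl
  have h2 : a0 + 1 ≤ k := ha
  have h3 : sig k l * (a0+1) ≤ k * k := Nat.mul_le_mul h1 h2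
  have h4 := hh_le (l := l) hk
  have h5 : k * k = k^2 := by ring
  have h6 : 0 < k^2 := by positivity
  omega

lemma enc_lt {k l a0 : ℕ} (hk : 1 ≤ k) (hl : l < k^3) (ha : a0 < k) :
    enc k l a0 < 2*k^3 := by
  unfold enc
  have h1 := enc_t_lt hk hl ha
  have h2 : a0 ≤ k - 1 := by omega
  have h3 : a0 * (2*k^2) ≤ (k-1) * (2*k^2) := Nat.mul_le_mul_right _ h2
  have h4 : (k-1) * (2*k^2) + 2*k^2 = k * (2*k^2) := by
    have : k - 1 + 1 = k := by omega
    calc (k-1) * (2*k^2) + 2*k^2 = ((k-1) + 1) * (2*k^2) := by ring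
      _ = k * (2*k^2) := by rw [this]
  have h5 : k * (2*k^2) = 2*k^3 := by ring
  omega

lemma aa_enc {k l a0 : ℕ} (hk : 1 ≤ k) (hl : l < k^3) (ha : a0 < k) :
    aa k (enc k l a0) = a0 + 1 := by
  unfold aa enc
  have h2 : 0 < 2*k^2 := by positivity
  have ht := enc_t_lt hk hl ha
  have e : a0*(2*k^2) + (sig k l*(a0+1) + hh k l - 1) =
      (sig k l*(a0+1) + hh k l - 1) + (2*k^2)*a0 := by ring
  rw [e, Nat.add_mul_div_left _ _ h2, Nat.div_eq_of_lt ht, Nat.zero_add]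

lemma bb_enc {k l a0 : ℕ} (hk : 1 ≤ k) (hl : l < k^3) (ha : a0 < k) :
    bb k (enc k l a0) = sig k l*(a0+1) + hh k l := by
  unfold bb enc
  have ht := enc_t_lt hk hl ha
  have e : a0*(2*k^2) + (sig k l*(a0+1) + hh k l - 1) =
      (sig k l*(a0+1) + hh k l - 1) + (2*k^2)*a0 := by ring
  rw [e, Nat.add_mul_mod_self_left, Nat.mod_eq_of_lt ht]
  have := sig_ge (k := k) (l := l)
  have := hh_ge (k := k) (l := l)
  omega

lemma inc_val {k l a0 : ℕ} (hk : 1 ≤ k) (hl : l < k^3) (ha : a0 < k) :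
    xr k l + yr k (enc k l a0) = rr k l * sr k (enc k l a0) := by
  unfold xr rr yr sr
  rw [if_pos hl, if_pos hl, aa_enc hk hl ha, bb_enc hk hl ha]
  have hd := dd_cast hk hl
  have hdpos : (0:ℝ) < ((dd k l : ℕ):ℝ) := by
    have := dd_ge hk hl
    have : 0 < dd k l := by unfold BB at this; omega
    exact_mod_cast this
  have hden : (0:ℝ) < ((sig k l*(a0+1) + hh k l + BB k : ℕ):ℝ) := by
    have : 0 < sig k l*(a0+1) + hh k l + BB k := by unfold BB; omega
    exact_mod_cast this
  have hDne : ((k:ℝ)+1) * (((hh k l:ℕ):ℝ) + ((BB k:ℕ):ℝ)) - ((sig k l:ℕ):ℝ) ≠ 0 := by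
    rw [← hd]; exact hdpos.ne'
  have hdenne := hden.ne'
  push_cast at hd hDne hdenne ⊢
  rw [hd]
  field_simp
  ring

lemma numeric {k : ℕ} (hk : 1 ≤ k) :
    (1/3 : ℝ) * (((2*k^3 : ℕ)):ℝ) ^ ((4:ℝ)/3) ≤ ((k^4 : ℕ):ℝ) := by
  have hk0 : (0:ℝ) < (k:ℝ) := by exact_mod_cast hk
  have h1 : (((2*k^3 : ℕ)):ℝ) = 2 * (k:ℝ)^3 := by push_cast; ring
  have h2 : ((k^4 : ℕ):ℝ) = (k:ℝ)^4 := by push_cast; ring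
  rw [h1, h2]
  have h3 : (2 * (k:ℝ)^3) ^ ((4:ℝ)/3) = 2 ^ ((4:ℝ)/3) * ((k:ℝ)^3) ^ ((4:ℝ)/3) :=
    Real.mul_rpow (by norm_num) (by positivity)
  have h4 : ((k:ℝ)^3) ^ ((4:ℝ)/3) = (k:ℝ)^4 := by
    rw [← Real.rpow_natCast (k:ℝ) 3, ← Real.rpow_mul hk0.le]
    have e : ((3:ℕ):ℝ) * ((4:ℝ)/3) = ((4:ℕ):ℝ) := by norm_num
    rw [e, Real.rpow_natCast]
  have h5 : (2:ℝ) ^ ((4:ℝ)/3) ≤ 3 := by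
    have e : ((2:ℝ) ^ ((4:ℝ)/3)) ^ (3:ℕ) = 16 := by
      rw [← Real.rpow_natCast ((2:ℝ) ^ ((4:ℝ)/3)) 3, ← Real.rpow_mul (by norm_num)]
      norm_num
    have hp : (0:ℝ) < (2:ℝ) ^ ((4:ℝ)/3) := Real.rpow_pos_of_pos (by norm_num) _
    nlinarith [e, hp, sq_nonneg ((2:ℝ) ^ ((4:ℝ)/3) - 3), sq_nonneg ((2:ℝ) ^ ((4:ℝ)/3) + 3)]
  rw [h3, h4]
  have h6 : (0:ℝ) < (k:ℝ)^4 := by positivity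
  nlinarith [h5, h6]

/-- for infinitely many sizes there is a totally positive square
matrix and a value v attained by at least c·(size)^{4/3} of its maximal
(codimension-one) minors. -/
theorem stmt_7 : ∃ c : ℝ, 0 < c ∧ ∀ N : ℕ, ∃ n : ℕ, N ≤ n ∧
    ∃ (A : Matrix (Fin (n + 1)) (Fin (n + 1)) ℝ) (v : ℝ), TotallyPositive A ∧
      c * ((n + 1 : ℕ) : ℝ) ^ ((4 : ℝ) / 3)
        ≤ ((Finset.univ.filter fun q : Fin (n + 1) × Fin (n + 1) =>
            (A.submatrix q.1.succAbove q.2.succAbove).det = v).card : ℝ) := by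
  refine ⟨1/3, by norm_num, fun N => ?_⟩
  have hk : 1 ≤ max N 1 := le_max_right N 1
  set k := max N 1 with hkdef
  have hk3 : 1 ≤ k^3 := Nat.one_le_pow _ _ hk
  have hkk3 : k ≤ k^3 := Nat.le_self_pow (by norm_num) k
  refine ⟨2*k^3 - 1, by have := le_max_left N 1; omega, ?_⟩
  set n := 2*k^3 - 1 with hndef
  have hn : n + 1 = 2*k^3 := by omega
  have hm : 0 < n := by omega
  have hlt : ∀ i : Fin (n+1), i.val < 2*k^3 := fun i => by have := i.isLt; omega
  set x0 : Fin (n+1) → ℝ := fun i => xr k i.val with hx0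
  set y0 : Fin (n+1) → ℝ := fun i => yr k i.val with hy0
  set π := Tuple.sort x0 with hπdef
  set π' := Tuple.sort y0 with hπ'def
  have hx0inj : Function.Injective x0 := fun i j h =>
    Fin.val_injective (xr_inj hk (hlt i) (hlt j) h)
  have hy0inj : Function.Injective y0 := fun i j h =>
    Fin.val_injective (yr_inj hk (hlt i) (hlt j) h)
  set x : Fin (n+1) → ℝ := x0 ∘ π with hx_def
  set y : Fin (n+1) → ℝ := y0 ∘ π' with hy_def
  set r : Fin (n+1) → ℝ := (fun i => rr k i.val) ∘ π with hr_def
  set s : Fin (n+1) → ℝ := (fun i => sr k i.val) ∘ π' with hs_def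
  have hx : StrictMono x :=
    (Tuple.monotone_sort x0).strictMono_of_injective (hx0inj.comp π.injective)
  have hy : StrictMono y :=
    (Tuple.monotone_sort y0).strictMono_of_injective (hy0inj.comp π'.injective)
  have hr : ∀ i, 0 < r i := fun i => rr_pos hk (hlt _)
  have hs : ∀ j, 0 < s j := fun j => sr_pos hk
  have hxp : ∀ i, 0 < x i := fun i => xr_pos hk (hlt _)
  have hyp : ∀ j, 0 < y j := fun j => yr_pos hk
  have hpos : ∀ i j, 0 < x i + y j := fun i j => add_pos (hxp i) (hyp j)
  refine ⟨scmat (gscale (tfun x y r)) (gscale (tfun' x y s)) x y, 1, ?_, ?_⟩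
  · exact scmat_tp (gscale_pos (tfun_pos hx hr hpos)) (gscale_pos (tfun'_pos hy hs hpos))
      hx hy hpos
  set A := scmat (gscale (tfun x y r)) (gscale (tfun' x y s)) x y with hA
  set T := Finset.univ.filter fun q : Fin (n + 1) × Fin (n + 1) =>
      (A.submatrix q.1.succAbove q.2.succAbove).det = 1 with hT
  set F : Fin (k^3) × Fin k → Fin (n+1) × Fin (n+1) := fun p =>
    (π.symm ⟨p.1.val, by have := p.1.isLt; omega⟩,
     π'.symm ⟨enc k p.1.val p.2.val, by have := enc_lt hk p.1.isLt p.2.isLt; omega⟩) with hF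
  have hmem : ∀ p : Fin (k^3) × Fin k, F p ∈ T := by
    intro p
    rw [hT, Finset.mem_filter]
    refine ⟨Finset.mem_univ _, ?_⟩
    rw [hA, minor_val hm hx hy hr hs hpos]
    have e1 : x (F p).1 = xr k p.1.val := by
      rw [hx_def, hF]; simp; rfl
    have e2 : r (F p).1 = rr k p.1.val := by
      rw [hr_def, hF]; simp
    have e3 : y (F p).2 = yr k (enc k p.1.val p.2.val) := by
      rw [hy_def, hF]; simp; rfl
    have e4 : s (F p).2 = sr k (enc k p.1.val p.2.val) := by
      rw [hs_def, hF]; simp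
    rw [e1, e2, e3, e4, ← inc_val hk p.1.isLt p.2.isLt]
    exact div_self (add_pos (xr_pos hk (by have := p.1.isLt; omega))
      (yr_pos hk)).ne'
  have hinjF : Set.InjOn F ↑(Finset.univ : Finset (Fin (k^3) × Fin k)) := by
    intro p _ q _ hpq
    have h1 : (F p).1 = (F q).1 := congrArg Prod.fst hpq
    have h2 : (F p).2 = (F q).2 := congrArg Prod.snd hpq
    rw [hF] at h1 h2
    simp only at h1 h2
    have h1' := π.symm.injective h1
    have h2' := π'.symm.injective h2
    have hv1 : p.1.val = q.1.val := Fin.mk.inj_iff.mp h1'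
    have hv2 : enc k p.1.val p.2.val = enc k q.1.val q.2.val := Fin.mk.inj_iff.mp h2'
    have hp1 : p.1 = q.1 := Fin.val_injective hv1
    have hv2' : enc k p.1.val p.2.val = enc k p.1.val q.2.val := by rw [hv1] at hv2 ⊢; exact hv2
    have := congrArg (aa k) hv2'
    rw [aa_enc hk p.1.isLt p.2.isLt, aa_enc hk (by rw [hv1] at *; exact q.1.isLt) q.2.isLt] at this
    have hp2 : p.2 = q.2 := Fin.val_injective (by omega)
    exact Prod.ext hp1 hp2
  have hcard : k^4 ≤ T.card := by
    have := Finset.card_le_card_of_injOn F (fun p _ => hmem p) hinjF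
    have hc : (Finset.univ : Finset (Fin (k^3) × Fin k)).card = k^3 * k := by
      simp
    rw [hc] at this
    calc k^4 = k^3 * k := by ring
      _ ≤ T.card := this
  calc (1/3 : ℝ) * ((n + 1 : ℕ) : ℝ) ^ ((4:ℝ)/3)
      = (1/3 : ℝ) * (((2*k^3 : ℕ)):ℝ) ^ ((4:ℝ)/3) := by rw [hn]
    _ ≤ ((k^4 : ℕ):ℝ) := numeric hk
    _ ≤ (T.card : ℝ) := by exact_mod_cast hcard
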